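/- Let q ∈ (0,1), n ≥ 1 and k ∈ {0,…,n}. If S_n is a binomial random variable with parameters n and q, then e^{-n·kl(k/n, q)}/(n+1) ≤ P(S_n = k) ≤ e^{-n·kl(k/n, q)}, where kl(p,q) = p·log(p/q) + (1-p)·log((1-p)/(1-q)). -/

import Mathlib

/-- Kullback–Leibler divergence between Bernoulli(p) and Bernoulli(q)
(with Lean's convention `Real.log 0 = 0`, so the cases p ∈ {0,1} behave as usual). -/
noncomputable def bernKL (p q : ℝ) : ℝ :=
  p * Real.log (p / q) + (1 - p) * Real.log ((1 - p) / (1 - q))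


-- max term lemma in ℕ
lemma gmax' (n k : ℕ) (hk : k ≤ n) :
    ∀ j ≤ n, n.choose j * k ^ j * (n - k) ^ (n - j) ≤
      n.choose k * k ^ k * (n - k) ^ (n - k) := by
  set g : ℕ → ℕ := fun j => n.choose j * k ^ j * (n - k) ^ (n - j) with hg
  have step_up : ∀ j, j < k → g j ≤ g (j + 1) := by
    intro j hj
    have hjn : j < n := lt_of_lt_of_le hj hk
    have key : (n - k) * (j + 1) ≤ k * (n - j) := by
      zify [hk, hjn.le]
      nlinarith [mul_nonneg (Int.ofNat_nonneg n) (by omega : (0:ℤ) ≤ (k:ℤ) - j - 1)]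
    have h1 : n - j = (n - (j + 1)) + 1 := by omega
    have hcalc : g j * (j + 1) ≤ g (j + 1) * (j + 1) := by
      calc g j * (j + 1)
          = (n.choose j * k ^ j * (n - k) ^ (n - (j+1))) * ((n - k) * (j + 1)) := by
            simp only [hg, h1, pow_succ]; ring
        _ ≤ (n.choose j * k ^ j * (n - k) ^ (n - (j+1))) * (k * (n - j)) :=
            Nat.mul_le_mul_left _ key
        _ = (n.choose j * (n - j)) * k ^ (j+1) * (n - k) ^ (n - (j+1)) := by
            rw [pow_succ]; ring
        _ = (n.choose (j+1) * (j+1)) * k ^ (j+1) * (n - k) ^ (n - (j+1)) := by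
            rw [Nat.choose_succ_right_eq]
        _ = g (j + 1) * (j + 1) := by simp only [hg]; ring
    exact Nat.le_of_mul_le_mul_right hcalc (by omega)
  have step_down : ∀ j, k ≤ j → j < n → g (j + 1) ≤ g j := by
    intro j hj hjn
    have key : k * (n - j) ≤ (n - k) * (j + 1) := by
      zify [hk, hjn.le]
      nlinarith [mul_nonneg (Int.ofNat_nonneg n) (by omega : (0:ℤ) ≤ (j:ℤ) + 1 - k)]
    have h1 : n - j = (n - (j + 1)) + 1 := by omega
    have hcalc : g (j + 1) * (j + 1) ≤ g j * (j + 1) := by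
      calc g (j + 1) * (j + 1)
          = (n.choose (j+1) * (j+1)) * k ^ (j+1) * (n - k) ^ (n - (j+1)) := by
            simp only [hg]; ring
        _ = (n.choose j * (n - j)) * k ^ (j+1) * (n - k) ^ (n - (j+1)) := by
            rw [Nat.choose_succ_right_eq]
        _ = (n.choose j * k ^ j * (n - k) ^ (n - (j+1))) * (k * (n - j)) := by
            rw [pow_succ]; ring
        _ ≤ (n.choose j * k ^ j * (n - k) ^ (n - (j+1))) * ((n - k) * (j + 1)) :=
            Nat.mul_le_mul_left _ key
        _ = g j * (j + 1) := by simp only [hg, h1, pow_succ]; ring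
    exact Nat.le_of_mul_le_mul_right hcalc (by omega)
  have up : ∀ m, m ≤ k → g (k - m) ≤ g k := by
    intro m
    induction m with
    | zero => simp
    | succ i ih =>
      intro h
      have h2 : k - (i + 1) < k := by omega
      have h3 : k - (i + 1) + 1 = k - i := by omega
      calc g (k - (i + 1)) ≤ g (k - (i + 1) + 1) := step_up _ h2
        _ = g (k - i) := by rw [h3]
        _ ≤ g k := ih (by omega)
  have down : ∀ j, k ≤ j → j ≤ n → g j ≤ g k := by
    intro j hj hjn
    induction j, hj using Nat.le_induction with
    | base => exact le_refl _
    | succ j hj ih =>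
      calc g (j + 1) ≤ g j := step_down j hj (by omega)
        _ ≤ g k := ih (by omega)
  intro j hjn
  rcases le_or_gt j k with h | h
  · have := up (k - j) (by omega)
    simpa [Nat.sub_sub_self h] using this
  · exact down j h.le hjn

lemma gsum' (n k : ℕ) (hk : k ≤ n) :
    ∑ j ∈ Finset.range (n + 1), n.choose j * k ^ j * (n - k) ^ (n - j) = n ^ n := by
  have := add_pow k (n - k) n
  rw [Nat.add_sub_cancel' hk] at this
  rw [this]
  exact Finset.sum_congr rfl fun j _ => by push_cast; ring

theorem binomial_pmf_kl_bounds (q : ℝ) (hq : q ∈ Set.Ioo (0 : ℝ) 1)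
    (n k : ℕ) (hn : 1 ≤ n) (hk : k ≤ n) :
    Real.exp (-(n : ℝ) * bernKL (k / n) q) / (n + 1) ≤
      (n.choose k : ℝ) * q ^ k * (1 - q) ^ (n - k) ∧
    (n.choose k : ℝ) * q ^ k * (1 - q) ^ (n - k) ≤
      Real.exp (-(n : ℝ) * bernKL (k / n) q) := by
  obtain ⟨hq0, hq1⟩ := hq
  have hq1' : (0:ℝ) < 1 - q := by linarith
  have hnR : (0:ℝ) < n := by exact_mod_cast hn
  set p : ℝ := (k : ℝ) / n with hp
  set A : ℝ := p ^ k * (1 - p) ^ (n - k) with hA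
  set B : ℝ := q ^ k * (1 - q) ^ (n - k) with hB
  have hBpos : 0 < B := by positivity
  have h1p : 1 - p = ((n - k : ℕ) : ℝ) / n := by
    rw [hp, Nat.cast_sub hk]; field_simp
  -- positivity of A
  have hApos : 0 < A := by
    have h1 : 0 < p ^ k := by
      rcases Nat.eq_zero_or_pos k with h | h
      · simp [h]
      · have : 0 < p := by rw [hp]; positivity
        positivity
    have h2 : 0 < (1 - p) ^ (n - k) := by
      rcases eq_or_lt_of_le hk with h | h
      · simp [h]
      · have : 0 < 1 - p := by
          rw [h1p]
          have : (0:ℝ) < ((n - k : ℕ) : ℝ) := by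
            exact_mod_cast Nat.sub_pos_of_lt h
          positivity
        positivity
    rw [hA]; positivity
  -- key exponential identity
  have hE : Real.exp (-(n : ℝ) * bernKL p q) = B / A := by
    have hlog : -(n : ℝ) * bernKL p q = Real.log (B / A) := by
      have enp : (n : ℝ) * p = k := by rw [hp]; field_simp
      have enp' : (n : ℝ) * (1 - p) = ((n - k : ℕ) : ℝ) := by
        rw [h1p]; field_simp
      rcases Nat.eq_zero_or_pos k with hk0 | hkpos
      · subst hk0
        simp only [hp, hA, hB, Nat.cast_zero, zero_div, pow_zero, Nat.sub_zero,
          one_mul, sub_zero, bernKL, zero_mul, zero_add, one_pow, div_one,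
          Real.log_div one_ne_zero hq1'.ne', Real.log_one, Real.log_pow]
        ring
      rcases eq_or_lt_of_le hk with hkn | hkn
      · subst hkn
        simp only [hp, hA, hB, div_self hnR.ne', Nat.sub_self, pow_zero, mul_one,
          sub_self, bernKL, zero_mul, add_zero, one_mul, one_pow,
          Real.log_div one_ne_zero hq0.ne', Real.log_one, Real.log_pow]
        rw [div_one, Real.log_pow]; ring
      · have hp0 : 0 < p := by rw [hp]; positivity
        have hp1 : p < 1 := by
          rw [hp, div_lt_one hnR]; exact_mod_cast hkn
        have h1p0 : 0 < 1 - p := by linarith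
        rw [Real.log_div hBpos.ne' hApos.ne', hA, hB,
          Real.log_mul (by positivity) (by positivity),
          Real.log_mul (by positivity) (by positivity),
          Real.log_pow, Real.log_pow, Real.log_pow, Real.log_pow, bernKL,
          Real.log_div hp0.ne' hq0.ne', Real.log_div h1p0.ne' hq1'.ne']
        have hnk : ((n - k : ℕ) : ℝ) = (n : ℝ) - k := Nat.cast_sub hk
        rw [hnk]
        have enp2 : (n:ℝ) * (1 - p) = (n:ℝ) - k := by rw [enp', hnk]
        linear_combination (Real.log q - Real.log p) * enp +
          (Real.log (1 - q) - Real.log (1 - p)) * enp2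
    rw [hlog, Real.exp_log (by positivity)]
  -- the combinatorial quantity
  have hCA : (n.choose k : ℝ) * A =
      ((n.choose k * k ^ k * (n - k) ^ (n - k) : ℕ) : ℝ) / (n : ℝ) ^ n := by
    rw [hA, hp, h1p, div_pow, div_pow]
    push_cast
    rw [div_mul_div_comm, ← pow_add, Nat.add_sub_cancel' hk]
    field_simp
  have hnn : (0:ℝ) < (n:ℝ) ^ n := by positivity
  -- upper bound on choose term : g k ≤ n ^ n
  have hup : (n.choose k * k ^ k * (n - k) ^ (n - k) : ℕ) ≤ n ^ n := by
    rw [← gsum' n k hk]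
    exact Finset.single_le_sum (f := fun j => n.choose j * k ^ j * (n - k) ^ (n - j))
      (fun j _ => Nat.zero_le _) (Finset.mem_range.2 (by omega))
  have hlow : n ^ n ≤ (n + 1) * (n.choose k * k ^ k * (n - k) ^ (n - k)) := by
    calc n ^ n = ∑ j ∈ Finset.range (n + 1), n.choose j * k ^ j * (n - k) ^ (n - j) :=
          (gsum' n k hk).symm
      _ ≤ ∑ j ∈ Finset.range (n + 1), n.choose k * k ^ k * (n - k) ^ (n - k) :=
          Finset.sum_le_sum (fun j hj => gmax' n k hk j (by
            have := Finset.mem_range.1 hj; omega))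
      _ = (n + 1) * (n.choose k * k ^ k * (n - k) ^ (n - k)) := by
          rw [Finset.sum_const, Finset.card_range, smul_eq_mul]
  have hCA1 : (n.choose k : ℝ) * A ≤ 1 := by
    rw [hCA, div_le_one hnn]
    exact_mod_cast hup
  have hCA2 : (1:ℝ) ≤ ((n:ℝ) + 1) * ((n.choose k : ℝ) * A) := by
    rw [hCA, mul_div_assoc', le_div_iff₀ hnn, one_mul]
    calc (n:ℝ) ^ n ≤ ((n + 1) * (n.choose k * k ^ k * (n - k) ^ (n - k)) : ℕ) := by
          exact_mod_cast hlow
      _ = ((n:ℝ) + 1) * ((n.choose k * k ^ k * (n - k) ^ (n - k) : ℕ) : ℝ) := by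
          push_cast; ring
  constructor
  · rw [hE, div_div, div_le_iff₀ (by positivity)]
    nlinarith [mul_le_mul_of_nonneg_left hCA2 hBpos.le]
  · rw [hE, le_div_iff₀ hApos]
    nlinarith [mul_le_mul_of_nonneg_left hCA1 hBpos.le]
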